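/- (Condensation of determinants) Let A = (a_{i,j}) be an n×n matrix over a field (or commutative ring) with n > 2. Then (a_{1,1})^{n-2} · det A = det B, where B is the (n-1)×(n-1) matrix with entries b_{i,j} = det [[a_{1,1}, a_{1,j+1}], [a_{i+1,1}, a_{i+1,j+1}]] = a_{1,1}·a_{i+1,j+1} − a_{1,j+1}·a_{i+1,1}, for 1 ≤ i,j ≤ n-1. -/

import Mathlib

open Matrix

lemma chio_aux {R : Type*} [CommRing R] (n : ℕ)
    (A : Matrix (Fin (n + 3)) (Fin (n + 3)) R) :
    (A 0 0) ^ (n + 2) * A.det =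
      A 0 0 * Matrix.det (fun i j : Fin (n + 2) =>
        A 0 0 * A i.succ j.succ - A 0 j.succ * A i.succ 0) := by
  set a := A 0 0 with ha
  set S : Matrix (Fin (n+3)) (Fin (n+3)) R :=
    Matrix.of fun i j => (if i = 0 then (1:R) else a) * A i j with hS
  set N : Matrix (Fin (n+3)) (Fin (n+3)) R :=
    Matrix.of fun i j => S i j + (if i = 0 then 0 else -(A i 0)) * S 0 j with hN
  have hdetS : S.det = a ^ (n+2) * A.det := by
    rw [hS, det_mul_column]
    congr 1
    rw [Fin.prod_univ_succ]
    simp [Fin.succ_ne_zero]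
  have hdetN : N.det = S.det := by
    apply det_eq_of_forall_row_eq_smul_add_const
      (fun i => if i = 0 then 0 else -(A i 0)) 0 (by simp)
    intro i j
    simp [hN]
  have hNcol : ∀ i : Fin (n+3), i ≠ 0 → N i 0 = 0 := by
    intro i hi
    simp [hN, hS, hi, ← ha]; ring
  have hexp : N.det = a * Matrix.det (fun i j : Fin (n + 2) =>
      a * A i.succ j.succ - A 0 j.succ * A i.succ 0) := by
    rw [det_succ_column_zero]
    rw [Finset.sum_eq_single 0]
    · simp only [Fin.val_zero, pow_zero, one_mul, Fin.succAbove_zero]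
      have h0 : N 0 0 = a := by simp [hN, hS]; rfl
      rw [h0]
      congr 1
      have : N.submatrix Fin.succ Fin.succ = fun (i j : Fin (n+2)) =>
          a * A i.succ j.succ - A 0 j.succ * A i.succ 0 := by
        ext i j
        simp [hN, hS, Fin.succ_ne_zero, ← ha]
        ring
      rw [this]
    · intro b _ hb
      rw [hNcol b hb]; ring
    · intro h; exact absurd (Finset.mem_univ _) h
  rw [← hdetS, ← hdetN, hexp]

/-- Chiò condensation: `(a₁₁)^(n-2) ⬝ det A = det B` where `B` is the matrix of `2×2`
minors anchored at the `(1,1)` entry. -/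
theorem chio_condensation
    {R : Type*} [CommRing R] (n : ℕ)
    (A : Matrix (Fin (n + 3)) (Fin (n + 3)) R) :
    (A 0 0) ^ (n + 1) * A.det =
      Matrix.det fun i j : Fin (n + 2) =>
        A 0 0 * A i.succ j.succ - A 0 j.succ * A i.succ 0 := by
  -- work generically over a polynomial ring where `X (0,0)` is cancellable
  set σ := Fin (n + 3) × Fin (n + 3)
  set M : Matrix (Fin (n + 3)) (Fin (n + 3)) (MvPolynomial σ ℤ) :=
    Matrix.of fun i j => MvPolynomial.X (i, j) with hM
  have key : (M 0 0) ^ (n + 1) * M.det =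
      Matrix.det (fun i j : Fin (n + 2) =>
        M 0 0 * M i.succ j.succ - M 0 j.succ * M i.succ 0) := by
    have h := chio_aux n M
    have hX : M 0 0 ≠ 0 := by
      simp only [hM, Matrix.of_apply]
      exact MvPolynomial.X_ne_zero _
    apply mul_left_cancel₀ hX
    rw [← h]; ring
  set f : MvPolynomial σ ℤ →+* R :=
    MvPolynomial.eval₂Hom (Int.castRingHom R) (fun p : σ => A p.1 p.2)
  have hmap : M.map f = A := by
    ext i j
    simp [hM, f]
  have hA00 : f (M 0 0) = A 0 0 := by simp [hM, f]
  have h2 := congrArg f key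
  rw [_root_.map_mul, map_pow, RingHom.map_det, RingHom.map_det f (fun i j : Fin (n + 2) => M 0 0 * M i.succ j.succ - M 0 j.succ * M i.succ 0), RingHom.mapMatrix_apply, hmap, hA00] at h2
  rw [h2]
  congr 1
  ext i j
  erw [RingHom.mapMatrix_apply, Matrix.map_apply]
  simp [hM, f, RingHom.mapMatrix_apply, Matrix.map_apply]
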